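/- Let π : A → T be a surjective graded algebra map between oriented Artinian Gorenstein algebras with Gysin map ι. Then the image of ι equals the annihilator (0 :_A ker(π)) of ker(π) in A. -/
import Mathlib


/-- An oriented graded Artinian Gorenstein algebra: a finite-dimensional graded
algebra with top (socle) degree `d`, equipped with an orientation `intg`
(a nonzero linear functional supported in degree `d`) whose associated
multiplication pairing is non-degenerate. -/
structure OrientedAG (F : Type) [Field F] {A : Type} [CommRing A] [Algebra F A]
    (𝒜 : ℕ → Submodule F A) (d : ℕ) : Type where
  fin : FiniteDimensional F A
  top_ne : 𝒜 d ≠ ⊥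
  top_vanish : ∀ i, d < i → 𝒜 i = ⊥
  intg : A →ₗ[F] F
  intg_supported : ∀ i, i ≠ d → ∀ a ∈ 𝒜 i, intg a = 0
  intg_ne : intg ≠ 0
  nondeg : ∀ a : A, a ≠ 0 → ∃ b : A, intg (a * b) ≠ 0


/-- Remark: the image of the Gysin map is the annihilator of
`ker π` in `A`, i.e. `Im ι = (0 :_A ker π)`. -/
theorem gysin_range_eq_ann_ker
    (F : Type) [Field F] {A T : Type} [CommRing A] [Algebra F A] [CommRing T] [Algebra F T]
    (𝒜 : ℕ → Submodule F A) (𝒯 : ℕ → Submodule F T)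
    [GradedAlgebra 𝒜] [GradedAlgebra 𝒯]
    {d k : ℕ} (hk : k ≤ d)
    (OA : OrientedAG F 𝒜 d) (OT : OrientedAG F 𝒯 k)
    (π : A →ₐ[F] T) (hπ : ∀ i, ∀ a ∈ 𝒜 i, π a ∈ 𝒯 i)
    (hsurj : Function.Surjective π)
    (ι : T →ₗ[F] A)
    (hι : ∀ (t : T) (a : A), OA.intg (ι t * a) = OT.intg (t * π a)) :
    ∀ a : A, a ∈ LinearMap.range ι ↔ (∀ x : A, π x = 0 → a * x = 0) := by
  intro a
  haveI := OT.fin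
  constructor
  · rintro ⟨t, rfl⟩ x hx
    by_contra h
    obtain ⟨b, hb⟩ := OA.nondeg _ h
    apply hb
    rw [mul_assoc, hι]
    simp [hx]
  · intro ha
    set g : A →ₗ[F] F := OA.intg.comp (LinearMap.mulLeft F a) with hg
    have hker : LinearMap.ker π.toLinearMap ≤ LinearMap.ker g := by
      intro x hx
      simp only [LinearMap.mem_ker] at hx ⊢
      simp [hg, ha x hx]
    set e := π.toLinearMap.quotKerEquivOfSurjective hsurj with he
    set f : T →ₗ[F] F :=
      ((LinearMap.ker π.toLinearMap).liftQ g hker).comp e.symm.toLinearMap with hf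
    have hfpi : ∀ x : A, f (π x) = g x := by
      intro x
      have : e.symm (π x) = Submodule.Quotient.mk x := by
        rw [LinearEquiv.symm_apply_eq]
        rfl
      simp [hf, this]
    set Φ : T →ₗ[F] Module.Dual F T := (LinearMap.mul F T).compr₂ OT.intg with hΦ
    have hΦinj : Function.Injective Φ := by
      rw [← LinearMap.ker_eq_bot, eq_bot_iff]
      intro t ht
      simp only [LinearMap.mem_ker] at ht
      by_contra h
      obtain ⟨b, hb⟩ := OT.nondeg t (by simpa using h)
      apply hb
      have := congrArg (fun φ => φ b) ht
      simpa [hΦ] using this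
    have hΦsurj : Function.Surjective Φ :=
      (LinearMap.injective_iff_surjective_of_finrank_eq_finrank
        (Subspace.dual_finrank_eq).symm).mp hΦinj
    obtain ⟨t, ht⟩ := hΦsurj f
    refine ⟨t, ?_⟩
    by_contra h
    obtain ⟨b, hb⟩ := OA.nondeg (ι t - a) (sub_ne_zero.mpr h)
    apply hb
    have h1 : OA.intg (ι t * b) = f (π b) := by
      rw [hι]
      have := congrArg (fun φ => φ (π b)) ht
      simpa [hΦ] using this
    rw [sub_mul, map_sub, h1, hfpi]
    simp [hg]
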